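/- Uniqueness for the limiting BBGKY hierarchy: let C ≥ 1, T > 0, and let (γ^(k))_{k≥1} and (γ̃^(k))_{k≥1} be two families of continuous functions γ^(k), γ̃^(k) : [0,T]×[0,1]^k → ℝ, each satisfying the limiting BBGKY hierarchy on [0,T], such that γ^(k)(0,·) = γ̃^(k)(0,·) for every k and sup_{t∈[0,T], x⃗∈[0,1]^k} |γ^(k)(t,x⃗)| ≤ C^k and sup_{t∈[0,T], x⃗∈[0,1]^k} |γ̃^(k)(t,x⃗)| ≤ C^k for every k ≥ 1. Then γ^(k)(t,x⃗) = γ̃^(k)(t,x⃗) for every k ≥ 1, t ∈ [0,T] and x⃗ ∈ [0,1]^k. -/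

import Mathlib

set_option maxHeartbeats 1000000


open MeasureTheory Real

/-- Centered Gaussian density with variance `t`. -/
noncomputable def gaussD (t x : ℝ) : ℝ :=
  (2 * Real.pi * t) ^ (-(1:ℝ)/2) * Real.exp (-x ^ 2 / (2 * t))

/-- The Neumann heat kernel on `[0,1]` (transition density of reflected BM). -/
noncomputable def heatK (t x y : ℝ) : ℝ :=
  ∑' n : ℤ, (gaussD t (x - y + 2 * (n : ℝ)) + gaussD t (x + y + 2 * (n : ℝ)))

/-- The unit box `[0,1]^k`. -/
def unitBox (k : ℕ) : Set (Fin k → ℝ) := Set.univ.pi fun _ => Set.Icc (0:ℝ) 1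

lemma rpow_neg_half_eq (x : ℝ) : x ^ (-(1:ℝ)/2) = (Real.sqrt x)⁻¹ := by
  rcases lt_trichotomy x 0 with h | h | h
  · rw [Real.rpow_def_of_neg h, Real.sqrt_eq_zero_of_nonpos h.le]
    have hc : Real.cos (-(1:ℝ)/2 * π) = 0 := by
      rw [neg_div, neg_mul, Real.cos_neg, show (1:ℝ)/2 * π = π/2 by ring, Real.cos_pi_div_two]
    rw [hc, mul_zero, inv_zero]
  · subst h; rw [Real.zero_rpow (by norm_num), Real.sqrt_zero, inv_zero]
  · rw [show -(1:ℝ)/2 = -(1/2) by ring, Real.rpow_neg h.le, Real.sqrt_eq_rpow]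

lemma gaussD_eq (t x : ℝ) : gaussD t x = (Real.sqrt (2*π*t))⁻¹ * Real.exp (-x ^ 2 / (2 * t)) := by
  rw [gaussD, rpow_neg_half_eq]

lemma gaussD_nonneg (t x : ℝ) : 0 ≤ gaussD t x := by
  rw [gaussD_eq]; positivity

lemma heatK_nonneg (t x y : ℝ) : 0 ≤ heatK t x y :=
  tsum_nonneg fun n => add_nonneg (gaussD_nonneg _ _) (gaussD_nonneg _ _)

lemma measurable_gaussD : Measurable fun p : ℝ × ℝ => gaussD p.1 p.2 := by
  simp only [gaussD_eq]
  apply Measurable.mul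
  · exact (Real.continuous_sqrt.measurable.comp (measurable_fst.const_mul _)).inv
  · exact (Real.continuous_exp.measurable).comp
      (((measurable_snd.pow measurable_const).neg).div (measurable_fst.const_mul 2))

lemma integrable_gaussD {t : ℝ} (ht : 0 < t) : Integrable (gaussD t) := by
  have h2t : 0 < 1 / (2*t) := by positivity
  have : gaussD t = fun x => (Real.sqrt (2*π*t))⁻¹ * Real.exp (-(1/(2*t)) * x ^ 2) := by
    funext x; rw [gaussD_eq]; congr 1; congr 1; field_simp
  rw [this]
  exact (integrable_exp_neg_mul_sq h2t).const_mul _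

lemma integral_gaussD {t : ℝ} (ht : 0 < t) : ∫ x, gaussD t x = 1 := by
  have h2t : 0 < 1 / (2*t) := by positivity
  have h : ∀ x : ℝ, gaussD t x = (Real.sqrt (2*π*t))⁻¹ * Real.exp (-(1/(2*t)) * x ^ 2) := by
    intro x; rw [gaussD_eq]; congr 1; congr 1; field_simp
  calc ∫ x, gaussD t x = ∫ x, (Real.sqrt (2*π*t))⁻¹ * Real.exp (-(1/(2*t)) * x ^ 2) := by
        simp_rw [h]
    _ = (Real.sqrt (2*π*t))⁻¹ * ∫ x, Real.exp (-(1/(2*t)) * x ^ 2) := integral_const_mul _ _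
    _ = (Real.sqrt (2*π*t))⁻¹ * Real.sqrt (2*π*t) := by
        rw [integral_gaussian]; congr 2; field_simp
    _ = 1 := by
        apply inv_mul_cancel₀
        apply Real.sqrt_ne_zero'.mpr
        have := Real.pi_pos; positivity

lemma tsum_eq_toReal_ofReal {ι : Type*} [Countable ι] {g : ι → ℝ} (hg : ∀ n, 0 ≤ g n) :
    ∑' n, g n = (∑' n, ENNReal.ofReal (g n)).toReal := by
  by_cases h : Summable g
  · rw [← ENNReal.ofReal_tsum_of_nonneg hg h, ENNReal.toReal_ofReal (tsum_nonneg hg)]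
  · rw [tsum_eq_zero_of_not_summable h]
    have htop : ∑' n, ENNReal.ofReal (g n) = ⊤ := by
      by_contra hne
      apply h
      have hs : Summable fun n => (ENNReal.ofReal (g n)).toReal := by
        have := ENNReal.summable_toReal hne
        exact this
      have : (fun n => (ENNReal.ofReal (g n)).toReal) = g := by
        funext n; rw [ENNReal.toReal_ofReal (hg n)]
      rwa [this] at hs
    rw [htop, ENNReal.toReal_top]

lemma heatK_eq (t x y : ℝ) :
    heatK t x y = (∑' n : ℤ, (ENNReal.ofReal (gaussD t (x - y + 2 * (n:ℝ)))
      + ENNReal.ofReal (gaussD t (x + y + 2 * (n:ℝ))))).toReal := by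
  rw [heatK, tsum_eq_toReal_ofReal (fun n => add_nonneg (gaussD_nonneg _ _) (gaussD_nonneg _ _))]
  congr 1
  exact tsum_congr fun n => ENNReal.ofReal_add (gaussD_nonneg _ _) (gaussD_nonneg _ _)

lemma measurable_heatK (c : ℝ) : Measurable fun p : ℝ × ℝ => heatK p.1 c p.2 := by
  simp only [heatK_eq]
  apply ENNReal.measurable_toReal.comp
  apply Measurable.ennreal_tsum
  intro n
  apply Measurable.fun_add
  · exact ENNReal.measurable_ofReal.comp
      (measurable_gaussD.comp (measurable_fst.prodMk
        ((measurable_const.sub measurable_snd).add_const _)))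
  · exact ENNReal.measurable_ofReal.comp
      (measurable_gaussD.comp (measurable_fst.prodMk
        ((measurable_const.add measurable_snd).add_const _)))

lemma measurable_heatK_right (t x : ℝ) : Measurable fun y => heatK t x y :=
  (measurable_heatK x).comp (measurable_const.prodMk measurable_id)
lemma lintegral_gaussD_shift {t : ℝ} (ht : 0 < t) (c : ℝ) :
    (∫⁻ y in Set.Ioc (0:ℝ) 1, ENNReal.ofReal (gaussD t (c - y))) =
      ∫⁻ u in Set.Icc (c - 1) c, ENNReal.ofReal (gaussD t u) := by
  have hmp : MeasurePreserving (fun y : ℝ => c - y) volume volume :=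
    Measure.measurePreserving_sub_left volume c
  have hemb : MeasurableEmbedding (fun y : ℝ => c - y) :=
    (Homeomorph.subLeft c).measurableEmbedding
  rw [hmp.setLIntegral_comp_emb hemb (fun u => ENNReal.ofReal (gaussD t u)) (Set.Ioc 0 1)]
  have himg : (fun y : ℝ => c - y) '' Set.Ioc 0 1 = Set.Ico (c - 1) c := by
    rw [Set.image_const_sub_Ioc, sub_zero]
  rw [himg]
  rw [Measure.restrict_congr_set Ico_ae_eq_Icc]

lemma lintegral_gaussD_shift' {t : ℝ} (ht : 0 < t) (c : ℝ) :
    (∫⁻ y in Set.Ioc (0:ℝ) 1, ENNReal.ofReal (gaussD t (c + y))) =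
      ∫⁻ u in Set.Ioc c (c + 1), ENNReal.ofReal (gaussD t u) := by
  have hmp : MeasurePreserving (fun y : ℝ => c + y) volume volume :=
    measurePreserving_add_left volume c
  have hemb : MeasurableEmbedding (fun y : ℝ => c + y) :=
    (Homeomorph.addLeft c).measurableEmbedding
  rw [hmp.setLIntegral_comp_emb hemb (fun u => ENNReal.ofReal (gaussD t u)) (Set.Ioc 0 1)]
  congr 1
  rw [Set.image_const_add_Ioc]
  simp [add_comm]

lemma lintegral_heatK_le {t : ℝ} (ht : 0 < t) (x : ℝ) :
    ∫⁻ y in Set.Icc (0:ℝ) 1, ENNReal.ofReal (heatK t x y) ≤ 1 := by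
  have hgm : ∀ c : ℝ, Measurable fun u : ℝ => ENNReal.ofReal (gaussD t u) :=
    fun c => ENNReal.measurable_ofReal.comp
      (measurable_gaussD.comp (measurable_const.prodMk measurable_id))
  -- pointwise bound by the ENNReal tsum
  have hpt : ∀ y : ℝ, ENNReal.ofReal (heatK t x y) ≤
      ∑' n : ℤ, (ENNReal.ofReal (gaussD t (x - y + 2 * (n:ℝ)))
        + ENNReal.ofReal (gaussD t (x + y + 2 * (n:ℝ)))) := by
    intro y
    rw [heatK_eq]
    exact ENNReal.ofReal_toReal_le
  rw [Measure.restrict_congr_set Ioc_ae_eq_Icc.symm]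
  calc ∫⁻ y in Set.Ioc (0:ℝ) 1, ENNReal.ofReal (heatK t x y)
      ≤ ∫⁻ y in Set.Ioc (0:ℝ) 1, ∑' n : ℤ, (ENNReal.ofReal (gaussD t (x - y + 2 * (n:ℝ)))
        + ENNReal.ofReal (gaussD t (x + y + 2 * (n:ℝ)))) := lintegral_mono hpt
    _ = ∑' n : ℤ, ∫⁻ y in Set.Ioc (0:ℝ) 1, (ENNReal.ofReal (gaussD t (x - y + 2 * (n:ℝ)))
        + ENNReal.ofReal (gaussD t (x + y + 2 * (n:ℝ)))) := by
        apply lintegral_tsum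
        intro n
        apply AEMeasurable.fun_add
        · exact (ENNReal.measurable_ofReal.comp (measurable_gaussD.comp
            (measurable_const.prodMk ((measurable_const.sub measurable_id).add_const _)))).aemeasurable
        · exact (ENNReal.measurable_ofReal.comp (measurable_gaussD.comp
            (measurable_const.prodMk ((measurable_const.add measurable_id).add_const _)))).aemeasurable
    _ = ∑' n : ℤ, ∫⁻ u in Set.Ioc (x + 2*(n:ℝ) - 1) (x + 2*(n:ℝ) + 1), ENNReal.ofReal (gaussD t u) := by
        apply tsum_congr
        intro n
        have e1 : ∀ y : ℝ, x - y + 2*(n:ℝ) = (x + 2*(n:ℝ)) - y := fun y => by ring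
        have e2 : ∀ y : ℝ, x + y + 2*(n:ℝ) = (x + 2*(n:ℝ)) + y := fun y => by ring
        simp_rw [e1, e2]
        rw [lintegral_add_left (by exact (hgm 0).comp (measurable_const.sub measurable_id)) ,
          lintegral_gaussD_shift ht, lintegral_gaussD_shift' ht]
        rw [Measure.restrict_congr_set Ioc_ae_eq_Icc.symm]
        rw [← lintegral_union measurableSet_Ioc (Set.Ioc_disjoint_Ioc_of_le le_rfl)]
        rw [Set.Ioc_union_Ioc_eq_Ioc (by linarith) (by linarith)]
    _ = ∫⁻ u in ⋃ n : ℤ, Set.Ioc (x + 2*(n:ℝ) - 1) (x + 2*(n:ℝ) + 1), ENNReal.ofReal (gaussD t u) := by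
        rw [lintegral_iUnion (fun n => measurableSet_Ioc)]
        intro n m hnm
        rw [Function.onFun, Set.Ioc_disjoint_Ioc]
        rcases lt_or_gt_of_ne hnm with h | h
        · have : (n:ℝ) + 1 ≤ (m:ℝ) := by exact_mod_cast h
          calc min (x + 2*(n:ℝ) + 1) (x + 2*(m:ℝ) + 1) ≤ x + 2*(n:ℝ) + 1 := min_le_left _ _
            _ ≤ x + 2*(m:ℝ) - 1 := by linarith
            _ ≤ max (x + 2*(n:ℝ) - 1) (x + 2*(m:ℝ) - 1) := le_max_right _ _
        · have : (m:ℝ) + 1 ≤ (n:ℝ) := by exact_mod_cast h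
          calc min (x + 2*(n:ℝ) + 1) (x + 2*(m:ℝ) + 1) ≤ x + 2*(m:ℝ) + 1 := min_le_right _ _
            _ ≤ x + 2*(n:ℝ) - 1 := by linarith
            _ ≤ max (x + 2*(n:ℝ) - 1) (x + 2*(m:ℝ) - 1) := le_max_left _ _
    _ ≤ ∫⁻ u, ENNReal.ofReal (gaussD t u) := setLIntegral_le_lintegral _ _
    _ = 1 := by
        rw [← ofReal_integral_eq_lintegral_ofReal (integrable_gaussD ht)
          (Filter.Eventually.of_forall (gaussD_nonneg t))]
        rw [integral_gaussD ht, ENNReal.ofReal_one]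

lemma integrableOn_heatK {t : ℝ} (ht : 0 < t) (x : ℝ) :
    IntegrableOn (heatK t x) (Set.Icc (0:ℝ) 1) := by
  constructor
  · exact (measurable_heatK_right t x).aestronglyMeasurable
  · rw [hasFiniteIntegral_iff_norm]
    calc (∫⁻ y in Set.Icc (0:ℝ) 1, ENNReal.ofReal ‖heatK t x y‖)
        = ∫⁻ y in Set.Icc (0:ℝ) 1, ENNReal.ofReal (heatK t x y) := by
          apply lintegral_congr; intro y
          rw [Real.norm_eq_abs, abs_of_nonneg (heatK_nonneg t x y)]
      _ ≤ 1 := lintegral_heatK_le ht x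
      _ < ⊤ := ENNReal.one_lt_top

lemma integral_heatK_nonneg (t x : ℝ) : 0 ≤ ∫ y in Set.Icc (0:ℝ) 1, heatK t x y :=
  setIntegral_nonneg measurableSet_Icc fun y _ => heatK_nonneg t x y

lemma integral_heatK_le {t : ℝ} (ht : 0 < t) (x : ℝ) :
    ∫ y in Set.Icc (0:ℝ) 1, heatK t x y ≤ 1 := by
  have h := ofReal_integral_eq_lintegral_ofReal (integrableOn_heatK ht x)
    (Filter.Eventually.of_forall (fun y => heatK_nonneg t x y))
  have h2 : ENNReal.ofReal (∫ y in Set.Icc (0:ℝ) 1, heatK t x y) ≤ ENNReal.ofReal 1 := by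
    rw [h, ENNReal.ofReal_one]; exact lintegral_heatK_le ht x
  exact (ENNReal.ofReal_le_ofReal_iff zero_le_one).mp h2
/-- The `k`-fold Neumann heat semigroup:
`P^(k)_t Φ(x) = ∫_{[0,1]^k} Φ(y) ∏ᵢ p(t,xᵢ,yᵢ) dy` for `t > 0`, and `P^(k)_0 Φ = Φ`. -/
noncomputable def Ptk (k : ℕ) (t : ℝ) (Φ : (Fin k → ℝ) → ℝ) (x : Fin k → ℝ) : ℝ :=
  if t = 0 then Φ x else ∫ y in unitBox k, Φ y * ∏ i, heatK t (x i) (y i)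

lemma measurableSet_unitBox (k : ℕ) : MeasurableSet (unitBox k) :=
  MeasurableSet.univ_pi fun _ => measurableSet_Icc

lemma indicator_box_prod {k : ℕ} (f : Fin k → ℝ → ℝ) (y : Fin k → ℝ) :
    ∏ i, (Set.Icc (0:ℝ) 1).indicator (f i) (y i) =
      (unitBox k).indicator (fun z => ∏ i, f i (z i)) y := by
  by_cases h : y ∈ unitBox k
  · rw [Set.indicator_of_mem h]
    exact Finset.prod_congr rfl fun i _ =>
      Set.indicator_of_mem (h i (Set.mem_univ i)) _
  · rw [Set.indicator_of_notMem h]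
    have : ∃ i, y i ∉ Set.Icc (0:ℝ) 1 := by
      by_contra hc
      push_neg at hc
      exact h fun i _ => hc i
    obtain ⟨i, hi⟩ := this
    exact Finset.prod_eq_zero (Finset.mem_univ i) (Set.indicator_of_notMem hi _)

lemma integrable_indicator_prodK {k : ℕ} {t : ℝ} (ht : 0 < t) (x : Fin k → ℝ) :
    Integrable (fun y : Fin k → ℝ =>
      ∏ i, (Set.Icc (0:ℝ) 1).indicator (heatK t (x i)) (y i)) := by
  exact Integrable.fintype_prod (𝕜 := ℝ) fun i =>
    (integrable_indicator_iff measurableSet_Icc).mpr (integrableOn_heatK ht (x i))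

lemma integrableOn_prodK {k : ℕ} {t : ℝ} (ht : 0 < t) (x : Fin k → ℝ) :
    IntegrableOn (fun y : Fin k → ℝ => ∏ i, heatK t (x i) (y i)) (unitBox k) := by
  rw [← integrable_indicator_iff (measurableSet_unitBox k)]
  have := integrable_indicator_prodK ht x
  simpa only [indicator_box_prod] using this

lemma integral_prodK_le {k : ℕ} {t : ℝ} (ht : 0 < t) (x : Fin k → ℝ) :
    ∫ y in unitBox k, ∏ i, heatK t (x i) (y i) ≤ 1 := by
  rw [← integral_indicator (measurableSet_unitBox k)]
  simp_rw [← indicator_box_prod]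
  rw [integral_fintype_prod_volume_eq_prod (𝕜 := ℝ) (f := fun i =>
    (Set.Icc (0:ℝ) 1).indicator (heatK t (x i)))]
  apply Finset.prod_le_one
  · intro i _
    rw [integral_indicator measurableSet_Icc]
    exact integral_heatK_nonneg _ _
  · intro i _
    rw [integral_indicator measurableSet_Icc]
    exact integral_heatK_le ht _

lemma prodK_nonneg {k : ℕ} (t : ℝ) (x y : Fin k → ℝ) :
    0 ≤ ∏ i, heatK t (x i) (y i) :=
  Finset.prod_nonneg fun i _ => heatK_nonneg _ _ _

/-- difference contraction bound for `Ptk`. -/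
lemma Ptk_diff_abs_le {k : ℕ} {τ : ℝ} (hτ : 0 ≤ τ) {Φ Φ' : (Fin k → ℝ) → ℝ}
    {x : Fin k → ℝ} (hx : x ∈ unitBox k) {B D : ℝ} (hD : 0 ≤ D)
    (hΦm : AEStronglyMeasurable Φ (volume.restrict (unitBox k)))
    (hΦ'm : AEStronglyMeasurable Φ' (volume.restrict (unitBox k)))
    (hΦb : ∀ y ∈ unitBox k, |Φ y| ≤ B)
    (hΦ'b : ∀ y ∈ unitBox k, |Φ' y| ≤ B)
    (hdiff : ∀ y ∈ unitBox k, |Φ' y - Φ y| ≤ D) :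
    |Ptk k τ Φ' x - Ptk k τ Φ x| ≤ D := by
  rcases eq_or_lt_of_le hτ with h0 | hpos
  · rw [Ptk, Ptk, if_pos h0.symm, if_pos h0.symm]
    exact hdiff x hx
  · rw [Ptk, Ptk, if_neg (ne_of_gt hpos), if_neg (ne_of_gt hpos)]
    have hint : ∀ (Ψ : (Fin k → ℝ) → ℝ),
        AEStronglyMeasurable Ψ (volume.restrict (unitBox k)) →
        (∀ y ∈ unitBox k, |Ψ y| ≤ B) →
        Integrable (fun y => Ψ y * ∏ i, heatK τ (x i) (y i))
          (volume.restrict (unitBox k)) := by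
      intro Ψ hm hbd
      apply (integrableOn_prodK hpos x).bdd_mul hm
      apply (ae_restrict_iff' (measurableSet_unitBox k)).mpr
      exact Filter.Eventually.of_forall fun y hy => by
        rw [Real.norm_eq_abs]; exact hbd y hy
    have hintΦ := hint Φ hΦm hΦb
    have hintΦ' := hint Φ' hΦ'm hΦ'b
    rw [← integral_sub hintΦ' hintΦ]
    have hsub : ∀ y, Φ' y * ∏ i, heatK τ (x i) (y i) - Φ y * ∏ i, heatK τ (x i) (y i)
        = (Φ' y - Φ y) * ∏ i, heatK τ (x i) (y i) := fun y => by ring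
    simp_rw [hsub]
    have hgint : Integrable (fun y : Fin k → ℝ => D * ∏ i, heatK τ (x i) (y i))
        (volume.restrict (unitBox k)) := (integrableOn_prodK hpos x).const_mul D
    calc |∫ y in unitBox k, (Φ' y - Φ y) * ∏ i, heatK τ (x i) (y i)|
        ≤ ∫ y in unitBox k, D * ∏ i, heatK τ (x i) (y i) := by
          rw [← Real.norm_eq_abs]
          apply norm_integral_le_of_norm_le hgint
          apply (ae_restrict_iff' (measurableSet_unitBox k)).mpr
          apply Filter.Eventually.of_forall
          intro y hy
          rw [Real.norm_eq_abs, abs_mul, abs_of_nonneg (prodK_nonneg τ x y)]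
          exact mul_le_mul_of_nonneg_right (hdiff y hy) (prodK_nonneg τ x y)
      _ = D * ∫ y in unitBox k, ∏ i, heatK τ (x i) (y i) := integral_const_mul _ _
      _ ≤ D * 1 := mul_le_mul_of_nonneg_left (integral_prodK_le hpos x) hD
      _ = D := mul_one D

lemma Ptk_zero_fun {k : ℕ} (τ : ℝ) (x : Fin k → ℝ) : Ptk k τ (fun _ => 0) x = 0 := by
  rw [Ptk]; split <;> simp

lemma Ptk_abs_le {k : ℕ} {τ : ℝ} (hτ : 0 ≤ τ) {Φ : (Fin k → ℝ) → ℝ}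
    {x : Fin k → ℝ} (hx : x ∈ unitBox k) {B : ℝ} (hB : 0 ≤ B)
    (hΦm : AEStronglyMeasurable Φ (volume.restrict (unitBox k)))
    (hΦb : ∀ y ∈ unitBox k, |Φ y| ≤ B) : |Ptk k τ Φ x| ≤ B := by
  have := Ptk_diff_abs_le hτ hx hB aestronglyMeasurable_const hΦm
    (fun y _ => by simpa using hB) hΦb (fun y hy => by simpa using hΦb y hy)
    (Φ := fun _ => (0:ℝ)) (Φ' := Φ)
  rwa [Ptk_zero_fun, sub_zero] at this

lemma Ptk_congr {k : ℕ} {τ : ℝ} {Φ Φ' : (Fin k → ℝ) → ℝ} {x : Fin k → ℝ}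
    (hx : x ∈ unitBox k) (h : ∀ y ∈ unitBox k, Φ y = Φ' y) :
    Ptk k τ Φ x = Ptk k τ Φ' x := by
  rw [Ptk, Ptk]
  split
  · exact h x hx
  · apply setIntegral_congr_fun (measurableSet_unitBox k)
    intro y hy
    simp only [h y hy]
lemma snoc_mem_box {k : ℕ} {z : Fin k → ℝ} (hz : z ∈ unitBox k) (i : Fin k) :
    Fin.snoc z (z i) ∈ unitBox (k+1) := by
  intro j _
  refine Fin.lastCases ?_ ?_ j
  · rw [Fin.snoc_last]; exact hz i (Set.mem_univ i)
  · intro j'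
    rw [Fin.snoc_castSucc]
    exact hz j' (Set.mem_univ j')

lemma continuous_snocmap {k : ℕ} (i : Fin k) :
    Continuous (fun p : ℝ × (Fin k → ℝ) => ((p.1, Fin.snoc p.2 (p.2 i)) : ℝ × (Fin (k+1) → ℝ))) := by
  refine continuous_fst.prodMk (continuous_pi ?_)
  intro j
  refine Fin.lastCases ?_ ?_ j
  · simp only [Fin.snoc_last]
    exact (continuous_apply i).comp continuous_snd
  · intro j'
    simp only [Fin.snoc_castSucc]
    exact (continuous_apply j').comp continuous_snd

/-- slice continuity: for fixed `s ∈ [0,T]`, the integrand is `ContinuousOn` the box. -/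
lemma slice_continuousOn {k : ℕ} {T : ℝ} {γ1 : ℝ → (Fin (k+1) → ℝ) → ℝ}
    (hγc : ContinuousOn (fun q : ℝ × (Fin (k+1) → ℝ) => γ1 q.1 q.2)
      (Set.Icc (0:ℝ) T ×ˢ unitBox (k+1)))
    {s : ℝ} (hs : s ∈ Set.Icc (0:ℝ) T) (i : Fin k) :
    ContinuousOn (fun z : Fin k → ℝ => γ1 s (Fin.snoc z (z i))) (unitBox k) := by
  have hmap : Continuous (fun z : Fin k → ℝ => ((s, Fin.snoc z (z i)) : ℝ × (Fin (k+1) → ℝ))) := by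
    have := (continuous_snocmap i).comp (Continuous.prodMk (continuous_const (y := s)) continuous_id)
    simpa only [Function.comp_def, id_eq] using this
  have hmts : Set.MapsTo (fun z : Fin k → ℝ => ((s, Fin.snoc z (z i)) : ℝ × (Fin (k+1) → ℝ)))
      (unitBox k) (Set.Icc (0:ℝ) T ×ˢ unitBox (k+1)) :=
    fun z hz => Set.mk_mem_prod hs (snoc_mem_box hz i)
  have := hγc.comp hmap.continuousOn hmts
  simpa only [Function.comp_def] using this

lemma G_aestronglyMeasurable {k : ℕ} {T t : ℝ} (ht : 0 < t) (htT : t ≤ T)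
    {γ1 : ℝ → (Fin (k+1) → ℝ) → ℝ}
    (hγc : ContinuousOn (fun q : ℝ × (Fin (k+1) → ℝ) => γ1 q.1 q.2)
      (Set.Icc (0:ℝ) T ×ˢ unitBox (k+1)))
    (i : Fin k) (x : Fin k → ℝ) :
    AEStronglyMeasurable
      (fun s => ∫ y in unitBox k, γ1 s (Fin.snoc y (y i)) * ∏ j, heatK (t - s) (x j) (y j))
      (volume.restrict (Set.Ioc (0:ℝ) t)) := by
  set μ : Measure ℝ := volume.restrict (Set.Ioc (0:ℝ) t)
  set ν : Measure (Fin k → ℝ) := volume.restrict (unitBox k)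
  have hB : AEStronglyMeasurable
      (fun p : ℝ × (Fin k → ℝ) => ∏ j, heatK (t - p.1) (x j) (p.2 j)) (μ.prod ν) := by
    apply Measurable.aestronglyMeasurable
    apply Finset.measurable_prod
    intro j _
    exact (measurable_heatK (x j)).comp
      ((measurable_const.sub measurable_fst).prodMk ((measurable_pi_apply j).comp measurable_snd))
  have hA : AEStronglyMeasurable
      (fun p : ℝ × (Fin k → ℝ) => γ1 p.1 (Fin.snoc p.2 (p.2 i))) (μ.prod ν) := by
    have hco : ContinuousOn (fun p : ℝ × (Fin k → ℝ) => γ1 p.1 (Fin.snoc p.2 (p.2 i)))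
        (Set.Icc (0:ℝ) T ×ˢ unitBox k) := by
      have hmts : Set.MapsTo (fun p : ℝ × (Fin k → ℝ) => ((p.1, Fin.snoc p.2 (p.2 i)) : ℝ × (Fin (k+1) → ℝ)))
          (Set.Icc (0:ℝ) T ×ˢ unitBox k) (Set.Icc (0:ℝ) T ×ˢ unitBox (k+1)) :=
        fun p hp => Set.mk_mem_prod hp.1 (snoc_mem_box hp.2 i)
      have := hγc.comp (continuous_snocmap i).continuousOn hmts
      simpa only [Function.comp_def] using this
    have h1 : AEStronglyMeasurable (fun p : ℝ × (Fin k → ℝ) => γ1 p.1 (Fin.snoc p.2 (p.2 i)))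
        ((volume.prod volume).restrict (Set.Icc (0:ℝ) T ×ˢ unitBox k)) :=
      hco.aestronglyMeasurable ((measurableSet_Icc).prod (measurableSet_unitBox k))
    have h2 := h1.restrict (s := Set.Ioc (0:ℝ) t ×ˢ unitBox k)
    have h3 : ((volume.prod volume).restrict (Set.Icc (0:ℝ) T ×ˢ unitBox k)).restrict
        (Set.Ioc (0:ℝ) t ×ˢ unitBox k) = (volume.prod volume).restrict
        (Set.Ioc (0:ℝ) t ×ˢ unitBox k) := by
      rw [Measure.restrict_restrict (measurableSet_Ioc.prod (measurableSet_unitBox k))]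
      congr 1
      apply Set.inter_eq_left.mpr
      apply Set.prod_mono_left
      exact fun s hs => ⟨hs.1.le, hs.2.trans htT⟩
    rw [h3] at h2
    rwa [show μ.prod ν = (volume.prod volume).restrict (Set.Ioc (0:ℝ) t ×ˢ unitBox k) from
      Measure.prod_restrict _ _]
  exact (hA.mul hB).integral_prod_right'
lemma intervalIntegrable_G {k : ℕ} {T t : ℝ} (ht : 0 < t) (htT : t ≤ T)
    {γ1 : ℝ → (Fin (k+1) → ℝ) → ℝ}
    (hγc : ContinuousOn (fun q : ℝ × (Fin (k+1) → ℝ) => γ1 q.1 q.2)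
      (Set.Icc (0:ℝ) T ×ˢ unitBox (k+1)))
    {C1 : ℝ} (hC1 : 0 ≤ C1)
    (hbd : ∀ s ∈ Set.Icc (0:ℝ) T, ∀ w ∈ unitBox (k+1), |γ1 s w| ≤ C1)
    (i : Fin k) {x : Fin k → ℝ} (hx : x ∈ unitBox k) :
    IntervalIntegrable (fun s => Ptk k (t - s) (fun z => γ1 s (Fin.snoc z (z i))) x)
      volume 0 t := by
  rw [intervalIntegrable_iff, Set.uIoc_of_le ht.le]
  have hne : ∀ᵐ s ∂volume.restrict (Set.Ioc (0:ℝ) t), s ≠ t := by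
    refine ae_iff.mpr (measure_mono_null (t := ({t} : Set ℝ)) (fun s hs => by simpa using not_not.mp hs) ?_)
    exact le_antisymm ((Measure.restrict_le_self) _ |>.trans_eq Real.volume_singleton) (zero_le)
  have hGb : ∀ s ∈ Set.Ioc (0:ℝ) t,
      ‖Ptk k (t - s) (fun z => γ1 s (Fin.snoc z (z i))) x‖ ≤ C1 := by
    intro s hs
    rw [Real.norm_eq_abs]
    have hsT : s ∈ Set.Icc (0:ℝ) T := ⟨hs.1.le, hs.2.trans htT⟩
    apply Ptk_abs_le (sub_nonneg.mpr hs.2) hx hC1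
    · exact (slice_continuousOn hγc hsT i).aestronglyMeasurable (measurableSet_unitBox k)
    · exact fun z hz => hbd s hsT _ (snoc_mem_box hz i)
  constructor
  · apply ((G_aestronglyMeasurable ht htT hγc i x).congr)
    filter_upwards [hne] with s hs
    rw [Ptk, if_neg (sub_ne_zero.mpr (Ne.symm hs))]
  · apply HasFiniteIntegral.restrict_of_bounded (C := C1)
    · rw [Real.volume_Ioc]; exact ENNReal.ofReal_lt_top
    · exact (ae_restrict_iff' measurableSet_Ioc).mpr (Filter.Eventually.of_forall hGb)

lemma pow_div_factorial_le_exp {x : ℝ} (hx : 0 ≤ x) (n : ℕ) :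
    x ^ n / n.factorial ≤ Real.exp x := by
  calc x ^ n / n.factorial ≤ ∑ i ∈ Finset.range (n+1), x ^ i / i.factorial := by
        refine Finset.single_le_sum (f := fun i => x ^ i / (i.factorial : ℝ))
          (fun i _ => by positivity) (Finset.self_mem_range_succ n)
    _ ≤ Real.exp x := Real.sum_le_exp_of_nonneg hx _
/-- A family `(γ^(k))_{k≥1}` of continuous functions on `[0,T]×[0,1]^k` satisfies the
limiting BBGKY hierarchy on `[0,T]` if for every `k ≥ 1`, `t ∈ [0,T]`, `x⃗ ∈ [0,1]^k`,
`γ^(k)(t,x⃗) = P^(k)_t γ^(k)(0,·)(x⃗)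
  − Σᵢ ∫₀ᵗ P^(k)_{t−s}( z⃗ ↦ γ^(k+1)(s,(z₁,…,z_k,zᵢ)) )(x⃗) ds`. -/
def SatisfiesLimitingHierarchy (T : ℝ) (γ : (k : ℕ) → ℝ → (Fin k → ℝ) → ℝ) : Prop :=
  (∀ k : ℕ, 1 ≤ k →
    ContinuousOn (fun q : ℝ × (Fin k → ℝ) => γ k q.1 q.2)
      (Set.Icc (0:ℝ) T ×ˢ unitBox k)) ∧
  ∀ k : ℕ, 1 ≤ k → ∀ t ∈ Set.Icc (0:ℝ) T, ∀ x ∈ unitBox k,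
    γ k t x = Ptk k t (γ k 0) x
      - ∑ i : Fin k, ∫ s in (0:ℝ)..t,
          Ptk k (t - s) (fun z => γ (k+1) s (Fin.snoc z (z i))) x

/-- uniqueness for the limiting BBGKY hierarchy among families that are
bounded by `C^k` and share the same initial data. -/
theorem limiting_hierarchy_uniqueness :
    ∀ C : ℝ, 1 ≤ C → ∀ T > (0:ℝ),
      ∀ γ γ' : (k : ℕ) → ℝ → (Fin k → ℝ) → ℝ,
        SatisfiesLimitingHierarchy T γ → SatisfiesLimitingHierarchy T γ' →
        (∀ k : ℕ, 1 ≤ k → γ k 0 = γ' k 0) →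
        (∀ k : ℕ, 1 ≤ k → ∀ t ∈ Set.Icc (0:ℝ) T, ∀ x ∈ unitBox k, |γ k t x| ≤ C ^ k) →
        (∀ k : ℕ, 1 ≤ k → ∀ t ∈ Set.Icc (0:ℝ) T, ∀ x ∈ unitBox k, |γ' k t x| ≤ C ^ k) →
        ∀ k : ℕ, 1 ≤ k → ∀ t ∈ Set.Icc (0:ℝ) T, ∀ x ∈ unitBox k,
          γ k t x = γ' k t x := by
  intro C hC T hT γ γ' hγ hγ' h0 hb hb'
  obtain ⟨hγc, hγe⟩ := hγ
  obtain ⟨hγ'c, hγ'e⟩ := hγ'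
  have hC0 : (0:ℝ) < C := lt_of_lt_of_le one_pos hC
  -- Main quantitative estimate by induction
  have main : ∀ a : ℝ, a ∈ Set.Icc (0:ℝ) T →
      (∀ k, 1 ≤ k → ∀ s ∈ Set.Icc (0:ℝ) a, ∀ x ∈ unitBox k, γ k s x = γ' k s x) →
      ∀ n : ℕ, ∀ k, 1 ≤ k → ∀ t ∈ Set.Icc a T, ∀ x ∈ unitBox k,
        |γ k t x - γ' k t x| ≤
          2 * C^(k+n) * ((k:ℝ)+(n:ℝ))^n * (t-a)^n / (n.factorial : ℝ) := by
    intro a ha hz n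
    induction n with
    | zero =>
      intro k hk t htm x hx
      have htTmem : t ∈ Set.Icc (0:ℝ) T := ⟨ha.1.trans htm.1, htm.2⟩
      have h1 := hb k hk t htTmem x hx
      have h2 := hb' k hk t htTmem x hx
      simp only [pow_zero, Nat.factorial_zero, Nat.cast_one, Nat.add_zero, mul_one, div_one,
        Nat.cast_zero, add_zero]
      calc |γ k t x - γ' k t x| ≤ |γ k t x| + |γ' k t x| := abs_sub _ _
        _ ≤ C^k + C^k := add_le_add h1 h2
        _ = 2 * C^(k+0) := by ring_nf
    | succ n ih =>
      intro k hk t htm x hx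
      obtain ⟨hat, htT⟩ := htm
      rcases eq_or_lt_of_le hat with heq | hlt
      · -- t = a : both sides vanish
        have hgz := hz k hk t ⟨ha.1.trans hat, heq ▸ le_refl t⟩ x hx
        rw [hgz, sub_self, abs_zero, ← heq, sub_self]
        simp
      · have ht0 : 0 < t := lt_of_le_of_lt ha.1 hlt
        have htmem : t ∈ Set.Icc (0:ℝ) T := ⟨ht0.le, htT⟩
        have hk1 : 1 ≤ k + 1 := by omega
        set G : Fin k → ℝ → ℝ :=
          fun i s => Ptk k (t - s) (fun z => γ (k+1) s (Fin.snoc z (z i))) x with hG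
        set G' : Fin k → ℝ → ℝ :=
          fun i s => Ptk k (t - s) (fun z => γ' (k+1) s (Fin.snoc z (z i))) x with hG'
        have e1 := hγe k hk t htmem x hx
        have e2 := hγ'e k hk t htmem x hx
        rw [h0 k hk] at e1
        have ed : γ k t x - γ' k t x =
            ∑ i : Fin k, ((∫ s in (0:ℝ)..t, G' i s) - ∫ s in (0:ℝ)..t, G i s) := by
          rw [e1, e2, Finset.sum_sub_distrib]
          ring
        set c₀ : ℝ := 2 * C^(k+1+n) * (((k:ℝ)+1)+(n:ℝ))^n / (n.factorial : ℝ) with hc₀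
        have hc₀0 : 0 ≤ c₀ := by positivity
        have hGint : ∀ i : Fin k, IntervalIntegrable (G i) volume 0 t := fun i =>
          intervalIntegrable_G ht0 htT (hγc (k+1) hk1) (by positivity)
            (fun s hs w hw => hb (k+1) hk1 s hs w hw) i hx
        have hG'int : ∀ i : Fin k, IntervalIntegrable (G' i) volume 0 t := fun i =>
          intervalIntegrable_G ht0 htT (hγ'c (k+1) hk1) (by positivity)
            (fun s hs w hw => hb' (k+1) hk1 s hs w hw) i hx
        have key : ∀ i : Fin k,
            |(∫ s in (0:ℝ)..t, G' i s) - ∫ s in (0:ℝ)..t, G i s| ≤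
              c₀ * ((t-a)^(n+1) / ((n:ℝ)+1)) := by
          intro i
          have hsub : (∫ s in (0:ℝ)..t, G' i s) - ∫ s in (0:ℝ)..t, G i s
              = ∫ s in (0:ℝ)..t, (G' i s - G i s) :=
            (intervalIntegral.integral_sub (hG'int i) (hGint i)).symm
          have hii : IntervalIntegrable (fun s => G' i s - G i s) volume 0 t :=
            (hG'int i).sub (hGint i)
          have hii1 : IntervalIntegrable (fun s => G' i s - G i s) volume 0 a := by
            apply hii.mono_set
            rw [Set.uIcc_subset_uIcc_iff_mem]
            constructor
            · exact Set.left_mem_uIcc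
            · rw [Set.uIcc_of_le ht0.le]; exact ⟨ha.1, hlt.le⟩
          have hii2 : IntervalIntegrable (fun s => G' i s - G i s) volume a t := by
            apply hii.mono_set
            rw [Set.uIcc_subset_uIcc_iff_mem, Set.uIcc_of_le ht0.le]
            exact ⟨⟨ha.1, hlt.le⟩, Set.right_mem_Icc.mpr ht0.le⟩
          have hadj : ∫ s in (0:ℝ)..t, (G' i s - G i s)
              = (∫ s in (0:ℝ)..a, (G' i s - G i s)) + ∫ s in a..t, (G' i s - G i s) :=
            (intervalIntegral.integral_add_adjacent_intervals hii1 hii2).symm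
          have hzero1 : (∫ s in (0:ℝ)..a, (G' i s - G i s)) = 0 := by
            have : Set.EqOn (fun s => G' i s - G i s) (fun _ => (0:ℝ)) (Set.uIcc 0 a) := by
              intro s hs
              rw [Set.uIcc_of_le ha.1] at hs
              have heq : ∀ z ∈ unitBox k,
                  γ' (k+1) s (Fin.snoc z (z i)) = γ (k+1) s (Fin.snoc z (z i)) := fun z hzz =>
                (hz (k+1) hk1 s hs _ (snoc_mem_box hzz i)).symm
              simp only [hG, hG']
              rw [Ptk_congr hx heq, sub_self]
            rw [intervalIntegral.integral_congr this, intervalIntegral.integral_zero]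
          have hptw : ∀ s ∈ Set.Ioc a t, |G' i s - G i s| ≤ c₀ * (s-a)^n := by
            intro s hs
            have hsT : s ∈ Set.Icc (0:ℝ) T := ⟨ha.1.trans hs.1.le, hs.2.trans htT⟩
            have hsa : 0 ≤ s - a := sub_nonneg.mpr hs.1.le
            have hd : ∀ z ∈ unitBox k,
                |γ' (k+1) s (Fin.snoc z (z i)) - γ (k+1) s (Fin.snoc z (z i))| ≤
                  c₀ * (s-a)^n := by
              intro z hzz
              rw [abs_sub_comm]
              have := ih (k+1) hk1 s ⟨hs.1.le, hs.2.trans htT⟩ _ (snoc_mem_box hzz i)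
              refine this.trans (le_of_eq ?_)
              rw [hc₀]
              push_cast
              ring
            simp only [hG, hG']
            apply Ptk_diff_abs_le (sub_nonneg.mpr hs.2) hx (by positivity)
              ((slice_continuousOn (hγc (k+1) hk1) hsT i).aestronglyMeasurable
                (measurableSet_unitBox k))
              ((slice_continuousOn (hγ'c (k+1) hk1) hsT i).aestronglyMeasurable
                (measurableSet_unitBox k))
              (B := C^(k+1))
              (fun z hzz => hb (k+1) hk1 s hsT _ (snoc_mem_box hzz i))
              (fun z hzz => hb' (k+1) hk1 s hsT _ (snoc_mem_box hzz i))
              hd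
          have hbint : IntervalIntegrable (fun s => c₀ * (s-a)^n) volume a t :=
            (Continuous.intervalIntegrable (continuous_const.mul (((continuous_id.sub continuous_const)).pow n)) _ _)
          have hval : (∫ s in a..t, c₀ * (s-a)^n) = c₀ * ((t-a)^(n+1) / ((n:ℝ)+1)) := by
            rw [intervalIntegral.integral_const_mul]
            congr 1
            rw [intervalIntegral.integral_comp_sub_right (fun u => u ^ n) a]
            simp [integral_pow, sub_self]
          have h2 : |∫ s in a..t, (G' i s - G i s)| ≤ c₀ * ((t-a)^(n+1) / ((n:ℝ)+1)) := by
            have := intervalIntegral.norm_integral_le_abs_of_norm_le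
              (f := fun s => G' i s - G i s) (g := fun s => c₀ * (s-a)^n)
              (μ := volume) (a := a) (b := t) ?_ hbint
            · rw [Real.norm_eq_abs] at this
              refine this.trans ?_
              rw [hval, abs_of_nonneg (mul_nonneg hc₀0 (div_nonneg
                (pow_nonneg (sub_nonneg.mpr hlt.le) _) (by positivity)))]
            · rw [Set.uIoc_of_le hlt.le]
              refine (ae_restrict_iff' measurableSet_Ioc).mpr (Filter.Eventually.of_forall ?_)
              intro s hs
              rw [Real.norm_eq_abs]
              exact hptw s hs
          rw [hsub, hadj, hzero1, zero_add]
          exact h2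
        rw [ed]
        have hsum : |∑ i : Fin k, ((∫ s in (0:ℝ)..t, G' i s) - ∫ s in (0:ℝ)..t, G i s)|
            ≤ (k:ℝ) * (c₀ * ((t-a)^(n+1) / ((n:ℝ)+1))) := by
          calc |∑ i : Fin k, ((∫ s in (0:ℝ)..t, G' i s) - ∫ s in (0:ℝ)..t, G i s)|
              ≤ ∑ i : Fin k, |(∫ s in (0:ℝ)..t, G' i s) - ∫ s in (0:ℝ)..t, G i s| :=
                Finset.abs_sum_le_sum_abs _ _
            _ ≤ ∑ _i : Fin k, c₀ * ((t-a)^(n+1) / ((n:ℝ)+1)) :=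
                Finset.sum_le_sum fun i _ => key i
            _ = (k:ℝ) * (c₀ * ((t-a)^(n+1) / ((n:ℝ)+1))) := by
                rw [Finset.sum_const, Finset.card_univ, Fintype.card_fin, nsmul_eq_mul]
        refine hsum.trans ?_
        have hta : 0 ≤ t - a := sub_nonneg.mpr hlt.le
        have harg : (k:ℝ) * (((k:ℝ)+1)+(n:ℝ))^n ≤ ((k:ℝ)+((n:ℝ)+1))^(n+1) := by
          have hX : ((k:ℝ)+1)+(n:ℝ) = (k:ℝ)+((n:ℝ)+1) := by ring
          rw [hX, pow_succ]
          have h1 : (0:ℝ) ≤ ((k:ℝ)+((n:ℝ)+1))^n := by positivity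
          have h2 : (k:ℝ) ≤ (k:ℝ)+((n:ℝ)+1) := by
            have : (0:ℝ) ≤ (n:ℝ)+1 := by positivity
            linarith
          calc (k:ℝ) * ((k:ℝ)+((n:ℝ)+1))^n = ((k:ℝ)+((n:ℝ)+1))^n * (k:ℝ) := by ring
            _ ≤ ((k:ℝ)+((n:ℝ)+1))^n * ((k:ℝ)+((n:ℝ)+1)) :=
                mul_le_mul_of_nonneg_left h2 h1
        calc (k:ℝ) * (c₀ * ((t-a)^(n+1) / ((n:ℝ)+1)))
            = 2 * C^(k+(n+1)) * ((k:ℝ) * (((k:ℝ)+1)+(n:ℝ))^n) * (t-a)^(n+1)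
              / (((n:ℕ)+1).factorial : ℝ) := by
              rw [hc₀, Nat.factorial_succ]
              have hnf : ((n.factorial : ℕ) : ℝ) ≠ 0 := by positivity
              have hn1 : ((n:ℝ)+1) ≠ 0 := by positivity
              field_simp
              push_cast
              ring
          _ ≤ 2 * C^(k+(n+1)) * ((k:ℝ)+((n:ℝ)+1))^(n+1) * (t-a)^(n+1)
              / (((n:ℕ)+1).factorial : ℝ) := by
              gcongr
          _ = 2 * C^(k+(n+1)) * ((k:ℝ)+((n+1:ℕ):ℝ))^(n+1) * (t-a)^(n+1)
              / (((n+1:ℕ)).factorial : ℝ) := by push_cast; ring_nf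
  -- one step of size (4C)⁻¹
  have window : ∀ a : ℝ, a ∈ Set.Icc (0:ℝ) T →
      (∀ k, 1 ≤ k → ∀ s ∈ Set.Icc (0:ℝ) a, ∀ x ∈ unitBox k, γ k s x = γ' k s x) →
      ∀ k, 1 ≤ k → ∀ t ∈ Set.Icc (0:ℝ) T, t ≤ a + (4*C)⁻¹ → ∀ x ∈ unitBox k,
        γ k t x = γ' k t x := by
    intro a ha hz k hk t htm hta x hx
    rcases le_or_gt t a with hcase | hcase
    · exact hz k hk t ⟨htm.1, hcase⟩ x hx
    · have haT : a ∈ Set.Icc (0:ℝ) T := ⟨ha.1, ha.2⟩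
      set r : ℝ := C * Real.exp 1 * (t - a) with hr
      have hr0 : 0 ≤ r := by
        have := Real.exp_pos (1:ℝ)
        have h1 : 0 ≤ t - a := sub_nonneg.mpr hcase.le
        positivity
      have hr1 : r < 1 := by
        have hexp4 : Real.exp 1 < 4 := by
          have := Real.exp_one_lt_d9
          linarith
        have h1 : t - a ≤ (4*C)⁻¹ := by linarith
        have h2 : r ≤ C * Real.exp 1 * (4*C)⁻¹ := by
          apply mul_le_mul_of_nonneg_left h1
          have := Real.exp_pos (1:ℝ); positivity
        have h3 : C * Real.exp 1 * (4*C)⁻¹ = Real.exp 1 / 4 := by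
          field_simp
        have h4 : Real.exp 1 / 4 < 1 := by linarith
        calc r ≤ C * Real.exp 1 * (4*C)⁻¹ := h2
          _ < 1 := by rw [h3]; exact h4
      have hbd : ∀ n : ℕ, |γ k t x - γ' k t x| ≤ 2 * (C * Real.exp 1)^k * r^n := by
        intro n
        have hm := main a haT hz n k hk t ⟨hcase.le, htm.2⟩ x hx
        refine hm.trans ?_
        have hexp : ((k:ℝ)+(n:ℝ))^n / (n.factorial : ℝ) ≤ Real.exp 1 ^ (k+n) := by
          have h1 : ((k:ℝ)+(n:ℝ))^n / (n.factorial : ℝ) ≤ Real.exp ((k:ℝ)+(n:ℝ)) :=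
            pow_div_factorial_le_exp (by positivity) n
          have h2 : Real.exp ((k:ℝ)+(n:ℝ)) = Real.exp 1 ^ (k+n) := by
            rw [← Real.exp_nat_mul]
            push_cast
            ring_nf
          rw [← h2]
          exact h1
        have hta : 0 ≤ t - a := sub_nonneg.mpr hcase.le
        calc 2 * C^(k+n) * ((k:ℝ)+(n:ℝ))^n * (t-a)^n / (n.factorial : ℝ)
            = 2 * C^(k+n) * (t-a)^n * (((k:ℝ)+(n:ℝ))^n / (n.factorial : ℝ)) := by ring
          _ ≤ 2 * C^(k+n) * (t-a)^n * Real.exp 1 ^ (k+n) := by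
              apply mul_le_mul_of_nonneg_left hexp
              positivity
          _ = 2 * (C * Real.exp 1)^k * r^n := by
              rw [hr, pow_add, pow_add, mul_pow, mul_pow]
              ring
      have hlim : Filter.Tendsto (fun n : ℕ => 2 * (C * Real.exp 1)^k * r^n)
          Filter.atTop (nhds 0) := by
        have := tendsto_pow_atTop_nhds_zero_of_lt_one hr0 hr1
        have h2 := this.const_mul (2 * (C * Real.exp 1)^k)
        simpa using h2
      have habs : |γ k t x - γ' k t x| ≤ 0 :=
        ge_of_tendsto' hlim hbd |>.trans (le_refl 0) |> (fun h => h)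
      have := le_antisymm habs (abs_nonneg _)
      exact sub_eq_zero.mp (abs_eq_zero.mp this)
  -- iterate the window
  have steps : ∀ m : ℕ, ∀ k, 1 ≤ k → ∀ t ∈ Set.Icc (0:ℝ) T, t ≤ (m:ℝ) * (4*C)⁻¹ →
      ∀ x ∈ unitBox k, γ k t x = γ' k t x := by
    intro m
    induction m with
    | zero =>
      intro k hk t htm h0t x hx
      have ht0 : t = 0 := le_antisymm (by simpa using h0t) htm.1
      subst ht0
      exact congrFun (h0 k hk) x
    | succ m ihm =>
      intro k hk t htm htm2 x hx
      set a : ℝ := min ((m:ℝ) * (4*C)⁻¹) T with haa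
      have haI : a ∈ Set.Icc (0:ℝ) T := by
        constructor
        · apply le_min _ hT.le
          positivity
        · exact min_le_right _ _
      have hzs : ∀ k', 1 ≤ k' → ∀ s ∈ Set.Icc (0:ℝ) a, ∀ x' ∈ unitBox k',
          γ k' s x' = γ' k' s x' := by
        intro k' hk' s hs x' hx'
        exact ihm k' hk' s ⟨hs.1, hs.2.trans (min_le_right _ _)⟩
          (hs.2.trans (min_le_left _ _)) x' hx'
      apply window a haI hzs k hk t htm ?_ x hx
      rcases le_or_gt ((m:ℝ) * (4*C)⁻¹) T with hmT | hmT
      · have haeq : a = (m:ℝ) * (4*C)⁻¹ := min_eq_left hmT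
        rw [haeq]
        push_cast at htm2
        have : ((m:ℝ)+1) * (4*C)⁻¹ = (m:ℝ) * (4*C)⁻¹ + (4*C)⁻¹ := by ring
        linarith [htm2, this]
      · have haeq : a = T := min_eq_right hmT.le
        rw [haeq]
        have : (0:ℝ) ≤ (4*C)⁻¹ := by positivity
        linarith [htm.2]
  intro k hk t htm x hx
  obtain ⟨m, hm⟩ := exists_nat_ge (T * (4*C))
  apply steps m k hk t htm ?_ x hx
  have h4C : (0:ℝ) < 4*C := by linarith
  have : (m:ℝ) * (4*C)⁻¹ = (m:ℝ) / (4*C) := by rw [div_eq_mul_inv]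
  rw [this]
  refine htm.2.trans ?_
  exact (le_div_iff₀ h4C).mpr hm
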